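/- Fix λ ⊢ n and a tableau T of shape λ with content {1,...,n}. Then the generalized higher Specht polynomials {F_{M,T} : M semistandard of shape λ with entry sum d} are linearly independent over ℚ. -/

import Mathlib

open MvPolynomial

noncomputable section
open scoped Classical

namespace GHS

def entrySumF (μ : YoungDiagram) (f : ℕ → ℕ → ℕ) : ℕ := ∑ c ∈ μ.cells, f c.1 c.2

def entryFun {μ : YoungDiagram} (M : SemistandardYoungTableau μ) : ℕ → ℕ → ℕ := fun r c => M r c

def entrySum {μ : YoungDiagram} (M : SemistandardYoungTableau μ) : ℕ := entrySumF μ (entryFun M)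

def entryMultisetF (μ : YoungDiagram) (f : ℕ → ℕ → ℕ) : Multiset ℕ :=
  μ.cells.val.map fun c => f c.1 c.2

def entryMultiset {μ : YoungDiagram} (M : SemistandardYoungTableau μ) : Multiset ℕ := entryMultisetF μ (entryFun M)

def countLtF (μ : YoungDiagram) (f : ℕ → ℕ → ℕ) (h : ℕ) : ℕ :=
  (μ.cells.filter fun c => f c.1 c.2 < h).card

def countGe {μ : YoungDiagram} (M : SemistandardYoungTableau μ) (t : ℕ) : ℕ :=
  (μ.cells.filter fun c => t ≤ M c.1 c.2).card

def maxEntryF (μ : YoungDiagram) (f : ℕ → ℕ → ℕ) : ℕ := μ.cells.sup fun c => f c.1 c.2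

def DspCF (n : ℕ) (μ : YoungDiagram) (f : ℕ → ℕ → ℕ) : Multiset ℕ :=
  (Finset.Icc 1 (maxEntryF μ f)).val.map fun h => n - countLtF μ f h

def DspC (n : ℕ) {μ : YoungDiagram} (M : SemistandardYoungTableau μ) : Multiset ℕ := DspCF n μ (entryFun M)

def stdFun (μ : YoungDiagram) (f : ℕ → ℕ → ℕ) : ℕ → ℕ → ℕ := fun r c =>
  if (r, c) ∈ μ then
    (μ.cells.filter fun c' => f c'.1 c'.2 < f r c ∨ (f c'.1 c'.2 = f r c ∧ c'.2 < c)).card + 1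
  else 0

def IsStandard (n : ℕ) {μ : YoungDiagram} (S : SemistandardYoungTableau μ) : Prop :=
  entryMultiset S = (Multiset.range n).map (· + 1)

def rowOfF (f : ℕ → ℕ → ℕ) (v : ℕ) : ℕ := sInf {r | ∃ c, f r c = v}

def DsiSet (n : ℕ) {μ : YoungDiagram} (S : SemistandardYoungTableau μ) : Finset ℕ :=
  (Finset.Ioo 0 n).filter fun i => rowOfF (entryFun S) i < rowOfF (entryFun S) (i + 1)

def jseq (n k : ℕ) (J : Multiset ℕ) (h : ℕ) : ℕ :=
  if h = 0 then 0 else if h = k then n else (J.sort (· ≤ ·)).getD (h - 1) 0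

def compFun (n k : ℕ) (J : Multiset ℕ) (h : ℕ) : ℕ := jseq n k J (h + 1) - jseq n k J h

def compMap (n k : ℕ) (J : Multiset ℕ) : Fin k → ℕ := fun h => compFun n k J (h : ℕ)

def contentOfJ (n k : ℕ) (J : Multiset ℕ) : Multiset ℕ :=
  (Multiset.range k).bind fun h => Multiset.replicate (compFun n k J h) h

def IsTabloid (n : ℕ) (μ : YoungDiagram) (T : Fin n → ℕ × ℕ) : Prop :=
  Function.Injective T ∧ ∀ i, T i ∈ μ

def IsStdFill (n : ℕ) (T : Fin n → ℕ × ℕ) : Prop :=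
  ∀ i j : Fin n,
    (((T i).1 = (T j).1 ∧ (T i).2 < (T j).2) ∨ ((T i).2 = (T j).2 ∧ (T i).1 < (T j).1)) → i < j

def rowGroup (n : ℕ) (T : Fin n → ℕ × ℕ) : Finset (Equiv.Perm (Fin n)) :=
  Finset.univ.filter fun τ => ∀ i, (T (τ i)).1 = (T i).1

def colGroup (n : ℕ) (T : Fin n → ℕ × ℕ) : Finset (Equiv.Perm (Fin n)) :=
  Finset.univ.filter fun σ => ∀ i, (T (σ i)).2 = (T i).2

def pmonF (n : ℕ) (f : ℕ → ℕ → ℕ) (T : Fin n → ℕ × ℕ) : MvPolynomial (Fin n) ℚ :=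
  ∏ i, X i ^ f (T i).1 (T i).2

def pexpF (n : ℕ) (f : ℕ → ℕ → ℕ) (T : Fin n → ℕ × ℕ) : Fin n →₀ ℕ :=
  Finsupp.equivFunOnFinite.symm fun i => f (T i).1 (T i).2

def symRT (n : ℕ) (T : Fin n → ℕ × ℕ) (p : MvPolynomial (Fin n) ℚ) : MvPolynomial (Fin n) ℚ :=
  ∑ τ ∈ rowGroup n T, rename (⇑τ) p

def antisym (n : ℕ) (T : Fin n → ℕ × ℕ) (p : MvPolynomial (Fin n) ℚ) : MvPolynomial (Fin n) ℚ :=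
  ∑ σ ∈ colGroup n T, ((Equiv.Perm.sign σ : ℤ) : ℚ) • rename (⇑σ) p

def youngSym (n : ℕ) (T : Fin n → ℕ × ℕ) (p : MvPolynomial (Fin n) ℚ) : MvPolynomial (Fin n) ℚ :=
  antisym n T (symRT n T p)

def stabCardF (n : ℕ) (f : ℕ → ℕ → ℕ) (T : Fin n → ℕ × ℕ) : ℕ :=
  ((rowGroup n T).filter fun τ : Equiv.Perm (Fin n) => rename (⇑τ) (pmonF n f T) = pmonF n f T).card

def rowPoly (n : ℕ) (f : ℕ → ℕ → ℕ) (T : Fin n → ℕ × ℕ) : MvPolynomial (Fin n) ℚ :=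
  (stabCardF n f T : ℚ)⁻¹ • symRT n T (pmonF n f T)

def FMTF (n : ℕ) (f : ℕ → ℕ → ℕ) (T : Fin n → ℕ × ℕ) : MvPolynomial (Fin n) ℚ :=
  (stabCardF n f T : ℚ)⁻¹ • youngSym n T (pmonF n f T)

def FMT (n : ℕ) {μ : YoungDiagram} (M : SemistandardYoungTableau μ) (T : Fin n → ℕ × ℕ) : MvPolynomial (Fin n) ℚ :=
  FMTF n (entryFun M) T

def degT (n : ℕ) (T : Fin n → ℕ × ℕ) (d : Fin n →₀ ℕ) (j : ℕ) : ℕ :=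
  ∑ i ∈ Finset.univ.filter fun i => (T i).2 = j, d i

def gtT (n : ℕ) (T : Fin n → ℕ × ℕ) (d e : Fin n →₀ ℕ) : Prop :=
  ∃ j, degT n T e j < degT n T d j ∧ ∀ j', j < j' → degT n T d j' = degT n T e j'

def VMF (n : ℕ) (μ : YoungDiagram) (f : ℕ → ℕ → ℕ) : Submodule ℚ (MvPolynomial (Fin n) ℚ) :=
  Submodule.span ℚ {p | ∃ T, IsTabloid n μ T ∧ p = FMTF n f T}

def VM (n : ℕ) {μ : YoungDiagram} (M : SemistandardYoungTableau μ) : Submodule ℚ (MvPolynomial (Fin n) ℚ) :=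
  VMF n μ (entryFun M)

def spechtP (n : ℕ) (T : Fin n → ℕ × ℕ) : MvPolynomial (Fin n) ℚ := ∏ i, X i ^ (T i).1

def SpechtSub (n : ℕ) (μ : YoungDiagram) : Submodule ℚ (MvPolynomial (Fin n) ℚ) :=
  Submodule.span ℚ {p | ∃ T, IsTabloid n μ T ∧ p = youngSym n T (spechtP n T)}

def EqHoms (n : ℕ) (W V : Submodule ℚ (MvPolynomial (Fin n) ℚ)) :
    Submodule ℚ (W →ₗ[ℚ] MvPolynomial (Fin n) ℚ) where
  carrier := {g | (∀ x, g x ∈ V) ∧ ∀ (σ : Equiv.Perm (Fin n)) (x y : W),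
      (y : MvPolynomial (Fin n) ℚ) = rename (⇑σ) (x : MvPolynomial (Fin n) ℚ) →
      g y = rename (⇑σ) (g x)}
  add_mem' := by
    rintro a b ⟨ha1, ha2⟩ ⟨hb1, hb2⟩
    refine ⟨fun x => ?_, fun σ x y hxy => ?_⟩
    · simpa using V.add_mem (ha1 x) (hb1 x)
    · simp [LinearMap.add_apply, map_add, ha2 σ x y hxy, hb2 σ x y hxy]
  zero_mem' := ⟨fun x => by simp, fun σ x y hxy => by simp⟩
  smul_mem' := by
    rintro c a ⟨ha1, ha2⟩
    refine ⟨fun x => ?_, fun σ x y hxy => ?_⟩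
    · simpa using V.smul_mem c (ha1 x)
    · simp [LinearMap.smul_apply, map_smul, ha2 σ x y hxy]

def multiplicityIn (n : ℕ) (W V : Submodule ℚ (MvPolynomial (Fin n) ℚ)) : ℕ :=
  Module.finrank ℚ ↑(EqHoms n W V)

def contentSub (n : ℕ) (μc : Multiset ℕ) : Submodule ℚ (MvPolynomial (Fin n) ℚ) :=
  Submodule.span ℚ {p | ∃ d : Fin n → ℕ, Finset.univ.val.map d = μc ∧ p = ∏ i, X i ^ d i}

def padded (n : ℕ) (μc : Multiset ℕ) : Multiset ℕ :=
  μc + Multiset.replicate (n - Multiset.card μc) 0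

def IsCocharge {μ : YoungDiagram} (C : SemistandardYoungTableau μ) : Prop :=
  ∀ h : ℕ, 0 < h → ∀ v ∈ μ.cells, C v.1 v.2 = h →
    (∀ v' ∈ μ.cells, C v'.1 v'.2 = h → v.2 ≤ v'.2) →
    ∃ v'' ∈ μ.cells, C v''.1 v''.2 = h - 1 ∧ v''.1 < v.1

def updF (f : ℕ → ℕ → ℕ) (r c v : ℕ) : ℕ → ℕ → ℕ :=
  fun r' c' => if r' = r ∧ c' = c then v else f r' c'

def slide : ℕ → (ℕ → ℕ → ℕ) → ℕ × ℕ → (ℕ → ℕ → ℕ) × (ℕ × ℕ)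
  | 0, f, p => (f, p)
  | fuel + 1, f, (r, c) =>
    let down := f (r + 1) c
    let right := f r (c + 1)
    if down = 0 ∧ right = 0 then (f, (r, c))
    else if right = 0 ∨ (down ≠ 0 ∧ down < right) then
      slide fuel (updF (updF f r c down) (r + 1) c 0) (r + 1, c)
    else
      slide fuel (updF (updF f r c right) r (c + 1) 0) (r, c + 1)

def evacAux : ℕ → (ℕ → ℕ → ℕ) → ℕ → ℕ → ℕ
  | 0, _ => fun _ _ => 0
  | m + 1, f =>
    let gp := slide (m + 1) (updF f 0 0 0) (0, 0)
    updF (evacAux m gp.1) gp.2.1 gp.2.2 (m + 1)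

def ctJfun (J : Multiset ℕ) (f : ℕ → ℕ → ℕ) : ℕ → ℕ → ℕ :=
  fun r c => J.countP fun j => j < f r c

def JminF (μ : YoungDiagram) (f : ℕ → ℕ → ℕ) : Multiset ℕ :=
  (Finset.Icc 1 (maxEntryF μ f)).val.map fun h => countLtF μ f h

def deltaOne (n : ℕ) (μ : YoungDiagram) (f : ℕ → ℕ → ℕ) (v : ℕ × ℕ) : Prop :=
  ¬ (rowOfF (evacAux n (stdFun μ f)) n < v.1)

def hatAdd (n : ℕ) (μ : YoungDiagram) (f : ℕ → ℕ → ℕ) (v : ℕ × ℕ) : ℕ → ℕ → ℕ :=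
  let Sv := evacAux (n + 1) (updF (evacAux n (stdFun μ f)) v.1 v.2 (n + 1))
  let Jp : Multiset ℕ := (JminF μ f).map (· + 1)
  if deltaOne n μ f v then ctJfun Jp Sv else ctJfun (1 ::ₘ Jp) Sv

def iotaHatFun (f : ℕ → ℕ → ℕ) : ℕ → ℕ → ℕ :=
  fun r c => if r = 0 then (if c = 0 then 0 else f 0 (c - 1)) else f r c

def iotaT (n : ℕ) (lam : YoungDiagram) (T : Fin n → ℕ × ℕ) : Fin (n + 1) → ℕ × ℕ :=
  fun i => if h : (i : ℕ) < n then T ⟨(i : ℕ), h⟩ else (0, lam.rowLen 0)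

def plusOneF (μ : YoungDiagram) (f : ℕ → ℕ → ℕ) : ℕ → ℕ → ℕ :=
  fun r c => if (r, c) ∈ μ then f r c + 1 else 0

def Omega (n : ℕ) (α : ℕ → ℕ) :=
  {w : Fin n → ℕ // ∀ h, (Finset.univ.filter fun i => w i = h).card = α h}

def shiftW (n : ℕ) (α : ℕ → ℕ) (σ : Equiv.Perm (Fin n)) (w : Omega n α) : Omega n α :=
  ⟨fun i => w.1 (σ.symm i), by
    intro h
    have key : (Finset.univ.filter fun i => w.1 (σ.symm i) = h)
        = (Finset.univ.filter fun i => w.1 i = h).image σ := by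
      ext i
      simp only [Finset.mem_filter, Finset.mem_univ, true_and, Finset.mem_image]
      constructor
      · intro hi
        exact ⟨σ.symm i, hi, Equiv.apply_symm_apply σ i⟩
      · rintro ⟨j, hj, rfl⟩
        simpa using hj
    rw [key, Finset.card_image_of_injective _ σ.injective]
    exact w.2 h⟩

def permOmega (n : ℕ) (α : ℕ → ℕ) (σ : Equiv.Perm (Fin n)) : Omega n α ≃ Omega n α where
  toFun := shiftW n α σ
  invFun := shiftW n α σ⁻¹
  left_inv w := by
    apply Subtype.ext
    funext i
    simp [shiftW, Equiv.Perm.inv_def]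
  right_inv w := by
    apply Subtype.ext
    funext i
    simp [shiftW, Equiv.Perm.inv_def]

def ExtPart (n d : ℕ) : Submodule ℚ (MvPolynomial (Fin (n + 1)) ℚ) :=
  ⨆ (lam : YoungDiagram) (_ : lam.card = n) (M : SemistandardYoungTableau lam) (_ : entrySum M = d)
    (v : ℕ × ℕ) (_ : v ∉ lam.cells) (ν : YoungDiagram) (_ : ν.cells = insert v lam.cells)
    (_ : deltaOne n lam (entryFun M) v),
    VMF (n + 1) ν (hatAdd n lam (entryFun M) v)

def LEPart (n d : ℕ) : Submodule ℚ (MvPolynomial (Fin (n + 1)) ℚ) :=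
  ⨆ (lam : YoungDiagram) (_ : lam.card = n) (M : SemistandardYoungTableau lam) (_ : entrySum M + n = d)
    (v : ℕ × ℕ) (_ : v ∉ lam.cells) (ν : YoungDiagram) (_ : ν.cells = insert v lam.cells)
    (_ : ¬ deltaOne n lam (entryFun M) v),
    VMF (n + 1) ν (hatAdd n lam (entryFun M) v)

def EPart (n d : ℕ) : Submodule ℚ (MvPolynomial (Fin (n + 1)) ℚ) :=
  ⨆ (e : ℕ) (_ : e + (n + 1) = d),
    (homogeneousSubmodule (Fin (n + 1)) ℚ e).map
      (LinearMap.mulLeft ℚ (∏ i : Fin (n + 1), (X i : MvPolynomial (Fin (n + 1)) ℚ)))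


-- L1
lemma sum_le_sum_of_sdiff {ι : Type*} (S S' : Finset ι) (v : ι → ℕ)
    (hcard : S.card = S'.card)
    (h : ∀ i ∈ S \ S', ∀ i' ∈ S' \ S, v i ≤ v i') :
    ∑ i ∈ S, v i ≤ ∑ i ∈ S', v i := by
  classical
  have h1 : ∑ i ∈ S, v i = ∑ i ∈ S ∩ S', v i + ∑ i ∈ S \ S', v i := by
    rw [← Finset.sum_filter_add_sum_filter_not S (· ∈ S') v,
      Finset.filter_mem_eq_inter, Finset.sdiff_eq_filter]
  have h2 : ∑ i ∈ S', v i = ∑ i ∈ S ∩ S', v i + ∑ i ∈ S' \ S, v i := by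
    rw [← Finset.sum_filter_add_sum_filter_not S' (· ∈ S) v,
      Finset.filter_mem_eq_inter, Finset.inter_comm, Finset.sdiff_eq_filter]
  rw [h1, h2]
  refine Nat.add_le_add_left ?_ _
  rcases (S' \ S).eq_empty_or_nonempty with he | hne
  · have : (S \ S').card = 0 := by
      rw [Finset.card_sdiff_comm hcard, he, Finset.card_empty]
    rw [Finset.card_eq_zero.mp this, he]
  · obtain ⟨b, hb, hbmin⟩ := Finset.exists_min_image (S' \ S) v hne
    calc ∑ i ∈ S \ S', v i ≤ (S \ S').card • v b :=
          Finset.sum_le_card_nsmul _ _ _ (fun i hi => h i hi b hb)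
      _ = (S' \ S).card • v b := by rw [Finset.card_sdiff_comm hcard]
      _ ≤ ∑ i ∈ S' \ S, v i := Finset.card_nsmul_le_sum _ _ _ (fun i hi => hbmin i hi)

-- strict mono with same image
lemma strictMonoFin_eq (L : ℕ) (f f' : ℕ → ℕ)
    (hf : ∀ a b, a < b → b < L → f a < f b) (hf' : ∀ a b, a < b → b < L → f' a < f' b)
    (him : (Finset.range L).image f = (Finset.range L).image f') :
    ∀ r < L, f r = f' r := by
  classical
  induction L with
  | zero => intro r hr; omega
  | succ L ih =>
    have htop : f L = f' L := by
      have h1 : f' L ≤ f L := by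
        have : f' L ∈ (Finset.range (L + 1)).image f := by
          rw [him]; exact Finset.mem_image_of_mem _ (Finset.self_mem_range_succ L)
        obtain ⟨a, ha, hfa⟩ := Finset.mem_image.mp this
        rw [Finset.mem_range] at ha
        rcases Nat.lt_succ_iff_lt_or_eq.mp ha with ha' | rfl
        · exact hfa ▸ (hf a L ha' (Nat.lt_succ_self L)).le
        · exact hfa.ge
      have h2 : f L ≤ f' L := by
        have : f L ∈ (Finset.range (L + 1)).image f' := by
          rw [← him]; exact Finset.mem_image_of_mem _ (Finset.self_mem_range_succ L)
        obtain ⟨a, ha, hfa⟩ := Finset.mem_image.mp this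
        rw [Finset.mem_range] at ha
        rcases Nat.lt_succ_iff_lt_or_eq.mp ha with ha' | rfl
        · exact hfa ▸ (hf' a L ha' (Nat.lt_succ_self L)).le
        · exact hfa.ge
      exact le_antisymm h2 h1
    have step : ∀ (g : ℕ → ℕ), (∀ a b, a < b → b < L + 1 → g a < g b) →
        (Finset.range L).image g = ((Finset.range (L+1)).image g).erase (g L) := by
      intro g hg
      ext x
      simp only [Finset.mem_image, Finset.mem_erase, Finset.mem_range]
      constructor
      · rintro ⟨a, ha, rfl⟩
        exact ⟨(hg a L ha (Nat.lt_succ_self L)).ne, a, Nat.lt_succ_of_lt ha, rfl⟩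
      · rintro ⟨hne, a, ha, rfl⟩
        rcases Nat.lt_succ_iff_lt_or_eq.mp ha with ha' | rfl
        · exact ⟨a, ha', rfl⟩
        · exact absurd rfl hne
    have him' : (Finset.range L).image f = (Finset.range L).image f' := by
      rw [step f hf, step f' hf', him, htop]
    intro r hr
    rcases Nat.lt_succ_iff_lt_or_eq.mp hr with hr' | rfl
    · exact ih (fun a b hab hb => hf a b hab (Nat.lt_succ_of_lt hb))
        (fun a b hab hb => hf' a b hab (Nat.lt_succ_of_lt hb)) him' r hr'
    · exact htop

def tdeg (n : ℕ) (T : Fin n → ℕ × ℕ) (e : Fin n →₀ ℕ) (j : ℕ) : ℕ :=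
  ∑ i ∈ Finset.univ.filter fun i => j ≤ (T i).2, e i

lemma pexp_apply (n : ℕ) (f : ℕ → ℕ → ℕ) (T : Fin n → ℕ × ℕ) (i : Fin n) :
    pexpF n f T i = f (T i).1 (T i).2 := by
  simp [pexpF]

lemma pmon_eq (n : ℕ) (f : ℕ → ℕ → ℕ) (T : Fin n → ℕ × ℕ) :
    pmonF n f T = monomial (pexpF n f T) 1 := by
  have h1 : monomial (pexpF n f T) (1:ℚ) = ∏ i, X i ^ (pexpF n f T) i := by
    rw [monomial_eq, map_one, one_mul, Finsupp.prod]
    refine Finset.prod_subset (Finset.subset_univ _) ?_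
    intro i _ hi
    rw [Finsupp.notMem_support_iff.mp hi, pow_zero]
  rw [h1, pmonF]
  exact Finset.prod_congr rfl fun i _ => by rw [pexp_apply]

lemma mapDomain_perm_apply {n : ℕ} (σ : Equiv.Perm (Fin n)) (e : Fin n →₀ ℕ) (i : Fin n) :
    (Finsupp.mapDomain (⇑σ) e) i = e (σ⁻¹ i) :=
  Finsupp.mapDomain_equiv_apply (f := σ) e i

lemma mem_rowGroup {n : ℕ} {T : Fin n → ℕ × ℕ} {τ : Equiv.Perm (Fin n)} :
    τ ∈ rowGroup n T ↔ ∀ i, (T (τ i)).1 = (T i).1 := by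
  simp [rowGroup]

lemma mem_colGroup {n : ℕ} {T : Fin n → ℕ × ℕ} {σ : Equiv.Perm (Fin n)} :
    σ ∈ colGroup n T ↔ ∀ i, (T (σ i)).2 = (T i).2 := by
  simp [colGroup]

theorem _root_.Equiv.Perm.apply_inv_self {α : Type*} (f : Equiv.Perm α) (x : α) :
    f (f⁻¹ x) = x := f.apply_symm_apply x

theorem _root_.Equiv.Perm.inv_apply_self {α : Type*} (f : Equiv.Perm α) (x : α) :
    f⁻¹ (f x) = x := f.symm_apply_apply x

lemma rowGroup_inv_apply {n : ℕ} {T : Fin n → ℕ × ℕ} {τ : Equiv.Perm (Fin n)}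
    (hτ : τ ∈ rowGroup n T) (i : Fin n) : (T (τ⁻¹ i)).1 = (T i).1 := by
  conv_rhs => rw [← Equiv.Perm.apply_inv_self τ i]
  exact (mem_rowGroup.mp hτ (τ⁻¹ i)).symm

lemma colGroup_inv_apply {n : ℕ} {T : Fin n → ℕ × ℕ} {σ : Equiv.Perm (Fin n)}
    (hσ : σ ∈ colGroup n T) (i : Fin n) : (T (σ⁻¹ i)).2 = (T i).2 := by
  conv_rhs => rw [← Equiv.Perm.apply_inv_self σ i]
  exact (mem_colGroup.mp hσ (σ⁻¹ i)).symm

lemma one_mem_rowGroup (n : ℕ) (T : Fin n → ℕ × ℕ) : 1 ∈ rowGroup n T :=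
  mem_rowGroup.mpr fun _ => rfl

lemma one_mem_colGroup (n : ℕ) (T : Fin n → ℕ × ℕ) : 1 ∈ colGroup n T :=
  mem_colGroup.mpr fun _ => rfl

lemma tdeg_mapDomain_col {n : ℕ} {T : Fin n → ℕ × ℕ} {σ : Equiv.Perm (Fin n)}
    (hσ : σ ∈ colGroup n T) (e : Fin n →₀ ℕ) (j : ℕ) :
    tdeg n T (Finsupp.mapDomain (⇑σ) e) j = tdeg n T e j := by
  unfold tdeg
  simp only [mapDomain_perm_apply]
  refine Finset.sum_bij' (fun i _ => σ⁻¹ i) (fun i _ => σ i) ?_ ?_ ?_ ?_ ?_ <;>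
    simp_all [show ∀ i, (T (σ.symm i)).2 = (T i).2 from colGroup_inv_apply hσ, mem_colGroup.mp hσ]

lemma T_surj {n : ℕ} {lam : YoungDiagram} {T : Fin n → ℕ × ℕ}
    (hT : IsTabloid n lam T) (hcard : lam.card = n) :
    ∀ v ∈ lam, ∃ i, T i = v := by
  intro v hv
  have himg : Finset.univ.image T = lam.cells := by
    apply Finset.eq_of_subset_of_card_le
    · intro x hx
      obtain ⟨i, _, rfl⟩ := Finset.mem_image.mp hx
      exact (YoungDiagram.mem_cells _).mpr (hT.2 i)
    · rw [Finset.card_image_of_injective _ hT.1]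
      simp [YoungDiagram.card, hcard]
  have : v ∈ Finset.univ.image T := by
    rw [himg]; exact (YoungDiagram.mem_cells _).mpr hv
  obtain ⟨i, _, hi⟩ := Finset.mem_image.mp this
  exact ⟨i, hi⟩



lemma tdeg_mapDomain_row_sum {n : ℕ} {T : Fin n → ℕ × ℕ} (τ : Equiv.Perm (Fin n))
    (e : Fin n →₀ ℕ) (j : ℕ) :
    tdeg n T (Finsupp.mapDomain (⇑τ) e) j
      = ∑ i ∈ Finset.univ.filter (fun i => j ≤ (T (τ i)).2), e i := by
  unfold tdeg
  simp only [mapDomain_perm_apply]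
  refine Finset.sum_bij' (fun i _ => τ⁻¹ i) (fun i _ => τ i) ?_ ?_ ?_ ?_ ?_ <;> simp_all

lemma row_fiber_card {n : ℕ} {T : Fin n → ℕ × ℕ} {τ : Equiv.Perm (Fin n)}
    (hτ : τ ∈ rowGroup n T) (j r : ℕ) :
    ((Finset.univ.filter fun i => j ≤ (T (τ i)).2).filter fun i => (T i).1 = r).card
      = ((Finset.univ.filter fun i => j ≤ (T i).2).filter fun i => (T i).1 = r).card := by
  refine Finset.card_bij' (fun i _ => τ i) (fun i _ => τ⁻¹ i) ?_ ?_ ?_ ?_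
  · intro i hi
    simp only [Finset.mem_filter, Finset.mem_univ, true_and] at hi ⊢
    exact ⟨hi.1, (mem_rowGroup.mp hτ i).trans hi.2⟩
  · intro i hi
    simp only [Finset.mem_filter, Finset.mem_univ, true_and] at hi ⊢
    refine ⟨?_, (rowGroup_inv_apply hτ i).trans hi.2⟩
    rw [Equiv.Perm.apply_inv_self]
    exact hi.1
  · intro i _; exact Equiv.Perm.inv_apply_self τ i
  · intro i _; exact Equiv.Perm.apply_inv_self τ i

lemma row_fiber_le {n : ℕ} {T : Fin n → ℕ × ℕ} {τ : Equiv.Perm (Fin n)} {v : Fin n → ℕ}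
    (hτ : τ ∈ rowGroup n T)
    (hmono : ∀ i i' : Fin n, (T i).1 = (T i').1 → (T i).2 ≤ (T i').2 → v i ≤ v i')
    (j r : ℕ) :
    ∑ i ∈ (Finset.univ.filter fun i => j ≤ (T (τ i)).2).filter (fun i => (T i).1 = r), v i
      ≤ ∑ i ∈ (Finset.univ.filter fun i => j ≤ (T i).2).filter (fun i => (T i).1 = r), v i := by
  refine sum_le_sum_of_sdiff _ _ _ (row_fiber_card hτ j r) ?_
  intro i hi i' hi'
  simp only [Finset.mem_sdiff, Finset.mem_filter, Finset.mem_univ, true_and] at hi hi'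
  have h1 : (T i).2 < j := by
    by_contra hc
    exact hi.2 ⟨le_of_not_gt hc, hi.1.2⟩
  exact hmono i i' (hi.1.2.trans hi'.1.2.symm) (h1.le.trans hi'.1.1)

lemma tdeg_row_le_gen {n : ℕ} {T : Fin n → ℕ × ℕ} {τ : Equiv.Perm (Fin n)} {v : Fin n → ℕ}
    (hτ : τ ∈ rowGroup n T)
    (hmono : ∀ i i' : Fin n, (T i).1 = (T i').1 → (T i).2 ≤ (T i').2 → v i ≤ v i')
    (j : ℕ) :
    ∑ i ∈ Finset.univ.filter (fun i => j ≤ (T (τ i)).2), v i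
      ≤ ∑ i ∈ Finset.univ.filter (fun i => j ≤ (T i).2), v i := by
  rw [← Finset.sum_fiberwise_of_maps_to (s := Finset.univ.filter (fun i => j ≤ (T i).2))
      (g := fun i => (T i).1) (t := Finset.univ.image fun i => (T i).1)
      (fun i _ => Finset.mem_image_of_mem _ (Finset.mem_univ i)) v,
    ← Finset.sum_fiberwise_of_maps_to (s := Finset.univ.filter (fun i => j ≤ (T (τ i)).2))
      (g := fun i => (T i).1) (t := Finset.univ.image fun i => (T i).1)
      (fun i _ => Finset.mem_image_of_mem _ (Finset.mem_univ i)) v]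
  exact Finset.sum_le_sum fun r _ => row_fiber_le hτ hmono j r

lemma tdeg_row_eq_gen {n : ℕ} {lam : YoungDiagram} {T : Fin n → ℕ × ℕ}
    {τ : Equiv.Perm (Fin n)} {v : Fin n → ℕ}
    (hT : IsTabloid n lam T) (hτ : τ ∈ rowGroup n T)
    (hmono : ∀ i i' : Fin n, (T i).1 = (T i').1 → (T i).2 ≤ (T i').2 → v i ≤ v i')
    (heq : ∀ j : ℕ, (∑ i ∈ Finset.univ.filter (fun i => j ≤ (T (τ i)).2), v i)
      = ∑ i ∈ Finset.univ.filter (fun i => j ≤ (T i).2), v i) :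
    ∀ i : Fin n, v (τ⁻¹ i) = v i := by
  have hfib : ∀ j r, r ∈ (Finset.univ.image fun i => (T i).1) →
      (∑ i ∈ (Finset.univ.filter fun i => j ≤ (T (τ i)).2).filter (fun i => (T i).1 = r), v i)
        = ∑ i ∈ (Finset.univ.filter fun i => j ≤ (T i).2).filter (fun i => (T i).1 = r), v i := by
    intro j r hr
    have h := heq j
    rw [← Finset.sum_fiberwise_of_maps_to (s := Finset.univ.filter (fun i => j ≤ (T i).2))
        (g := fun i => (T i).1) (t := Finset.univ.image fun i => (T i).1)
        (fun i _ => Finset.mem_image_of_mem _ (Finset.mem_univ i)) v,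
      ← Finset.sum_fiberwise_of_maps_to (s := Finset.univ.filter (fun i => j ≤ (T (τ i)).2))
        (g := fun i => (T i).1) (t := Finset.univ.image fun i => (T i).1)
        (fun i _ => Finset.mem_image_of_mem _ (Finset.mem_univ i)) v] at h
    exact (Finset.sum_eq_sum_iff_of_le fun r' _ => row_fiber_le hτ hmono j r').mp h r hr
  intro i
  have hrmem : (T i).1 ∈ Finset.univ.image fun i' => (T i').1 :=
    Finset.mem_image_of_mem _ (Finset.mem_univ i)
  have hA : (Finset.univ.filter fun i' => (T i).2 ≤ (T i').2).filter
        (fun i' => (T i').1 = (T i).1)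
      = insert i ((Finset.univ.filter fun i' => (T i).2 + 1 ≤ (T i').2).filter
          (fun i' => (T i').1 = (T i).1)) := by
    ext i'
    simp only [Finset.mem_filter, Finset.mem_univ, true_and, Finset.mem_insert]
    constructor
    · rintro ⟨h1, h2⟩
      rcases eq_or_lt_of_le h1 with h3 | h3
      · left
        exact hT.1 (Prod.ext h2 h3.symm)
      · exact Or.inr ⟨h3, h2⟩
    · rintro (rfl | ⟨h1, h2⟩)
      · exact ⟨le_refl _, rfl⟩
      · exact ⟨(Nat.le_succ _).trans h1, h2⟩
  have hiA : i ∉ (Finset.univ.filter fun i' => (T i).2 + 1 ≤ (T i').2).filter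
      (fun i' => (T i').1 = (T i).1) := by
    simp only [Finset.mem_filter, Finset.mem_univ, true_and]
    intro h
    exact Nat.not_succ_le_self _ h.1
  have hB : (Finset.univ.filter fun i' => (T i).2 ≤ (T (τ i')).2).filter
        (fun i' => (T i').1 = (T i).1)
      = insert (τ⁻¹ i) ((Finset.univ.filter fun i' => (T i).2 + 1 ≤ (T (τ i')).2).filter
          (fun i' => (T i').1 = (T i).1)) := by
    ext i'
    simp only [Finset.mem_filter, Finset.mem_univ, true_and, Finset.mem_insert]
    constructor
    · rintro ⟨h1, h2⟩
      rcases eq_or_lt_of_le h1 with h3 | h3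
      · left
        have hTτ : T (τ i') = T i :=
          Prod.ext ((mem_rowGroup.mp hτ i').trans h2) h3.symm
        have h4 := hT.1 hTτ
        rw [← h4, Equiv.Perm.inv_apply_self]
      · exact Or.inr ⟨h3, h2⟩
    · rintro (rfl | ⟨h1, h2⟩)
      · refine ⟨?_, rowGroup_inv_apply hτ i⟩
        rw [Equiv.Perm.apply_inv_self]
      · exact ⟨(Nat.le_succ _).trans h1, h2⟩
  have hiB : τ⁻¹ i ∉ (Finset.univ.filter fun i' => (T i).2 + 1 ≤ (T (τ i')).2).filter
      (fun i' => (T i').1 = (T i).1) := by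
    simp only [Finset.mem_filter, Finset.mem_univ, true_and]
    rw [Equiv.Perm.apply_inv_self]
    intro h
    exact Nat.not_succ_le_self _ h.1
  have e1 := hfib (T i).2 (T i).1 hrmem
  have e2 := hfib ((T i).2 + 1) (T i).1 hrmem
  rw [hA, hB, Finset.sum_insert hiA, Finset.sum_insert hiB, e2] at e1
  exact Nat.add_right_cancel e1

lemma pexp_apply' {n : ℕ} {lam : YoungDiagram} (M : SemistandardYoungTableau lam)
    (T : Fin n → ℕ × ℕ) (i : Fin n) :
    pexpF n (entryFun M) T i = M (T i).1 (T i).2 := by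
  simp [pexpF, entryFun]

lemma ssyt_hmono {n : ℕ} {lam : YoungDiagram} {T : Fin n → ℕ × ℕ}
    (hT : IsTabloid n lam T) (M : SemistandardYoungTableau lam) :
    ∀ i i' : Fin n, (T i).1 = (T i').1 → (T i).2 ≤ (T i').2 →
      pexpF n (entryFun M) T i ≤ pexpF n (entryFun M) T i' := by
  intro i i' h1 h2
  rw [pexp_apply', pexp_apply', h1]
  refine M.row_weak_of_le h2 ?_
  have := hT.2 i'
  rwa [← Prod.mk.eta (p := T i')] at this

lemma tdeg_row_le' {n : ℕ} {lam : YoungDiagram} {T : Fin n → ℕ × ℕ} {τ : Equiv.Perm (Fin n)}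
    (hT : IsTabloid n lam T) (M : SemistandardYoungTableau lam) (hτ : τ ∈ rowGroup n T)
    (j : ℕ) :
    tdeg n T (Finsupp.mapDomain (⇑τ) (pexpF n (entryFun M) T)) j
      ≤ tdeg n T (pexpF n (entryFun M) T) j := by
  rw [tdeg_mapDomain_row_sum]
  exact tdeg_row_le_gen hτ (ssyt_hmono hT M) j

lemma row_stab {n : ℕ} {lam : YoungDiagram} {T : Fin n → ℕ × ℕ} {τ : Equiv.Perm (Fin n)}
    (hT : IsTabloid n lam T) (M : SemistandardYoungTableau lam) (hτ : τ ∈ rowGroup n T)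
    (heq : ∀ j, tdeg n T (Finsupp.mapDomain (⇑τ) (pexpF n (entryFun M) T)) j
      = tdeg n T (pexpF n (entryFun M) T) j) :
    Finsupp.mapDomain (⇑τ) (pexpF n (entryFun M) T) = pexpF n (entryFun M) T := by
  have key := tdeg_row_eq_gen hT hτ (ssyt_hmono hT M)
    (fun j => by rw [← tdeg_mapDomain_row_sum]; exact heq j)
  ext a
  rw [mapDomain_perm_apply]
  exact key a

lemma col_entry_eq {n : ℕ} {lam : YoungDiagram} {T : Fin n → ℕ × ℕ} {σ : Equiv.Perm (Fin n)}
    (hT : IsTabloid n lam T) (hcard : lam.card = n)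
    (M M' : SemistandardYoungTableau lam) (hσ : σ ∈ colGroup n T)
    (h : Finsupp.mapDomain (⇑σ) (pexpF n (entryFun M') T) = pexpF n (entryFun M) T) :
    ∀ i : Fin n, M (T i).1 (T i).2 = M' (T i).1 (T i).2 := by
  have hpt : ∀ i : Fin n, M' (T (σ⁻¹ i)).1 (T (σ⁻¹ i)).2 = M (T i).1 (T i).2 := by
    intro i
    have := congrFun (congrArg (fun (g : Fin n →₀ ℕ) => (g : Fin n → ℕ)) h) i
    rw [mapDomain_perm_apply, pexp_apply', pexp_apply'] at this
    exact this
  intro i0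
  have hmem0 := hT.2 i0
  rw [← Prod.mk.eta (p := T i0)] at hmem0
  have hr0 : (T i0).1 < lam.colLen (T i0).2 := YoungDiagram.mem_iff_lt_colLen.mp hmem0
  -- the two column images agree
  have him : (Finset.range (lam.colLen (T i0).2)).image (fun r => M r (T i0).2)
      = (Finset.range (lam.colLen (T i0).2)).image (fun r => M' r (T i0).2) := by
    have h1 : ∀ (N : SemistandardYoungTableau lam),
        (Finset.range (lam.colLen (T i0).2)).image (fun r => N r (T i0).2)
        = (Finset.univ.filter fun i => (T i).2 = (T i0).2).image
            (fun i => N (T i).1 (T i).2) := by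
      intro N
      ext x
      simp only [Finset.mem_image, Finset.mem_range, Finset.mem_filter, Finset.mem_univ,
        true_and]
      constructor
      · rintro ⟨r, hrL, rfl⟩
        obtain ⟨i, hi⟩ := T_surj hT hcard (r, (T i0).2)
          (YoungDiagram.mem_iff_lt_colLen.mpr hrL)
        refine ⟨i, ?_, ?_⟩ <;> rw [hi]
      · rintro ⟨i, hic, rfl⟩
        refine ⟨(T i).1, ?_, by rw [hic]⟩
        have hmem := hT.2 i
        rw [← Prod.mk.eta (p := T i), hic] at hmem
        exact YoungDiagram.mem_iff_lt_colLen.mp hmem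
    rw [h1 M, h1 M']
    ext x
    simp only [Finset.mem_image, Finset.mem_filter, Finset.mem_univ, true_and]
    constructor
    · rintro ⟨i, hic, rfl⟩
      refine ⟨σ⁻¹ i, ?_, hpt i⟩
      rw [colGroup_inv_apply hσ, hic]
    · rintro ⟨i, hic, rfl⟩
      refine ⟨σ i, ?_, ?_⟩
      · rw [mem_colGroup.mp hσ, hic]
      · have := hpt (σ i)
        rw [Equiv.Perm.inv_apply_self] at this
        exact this.symm
  have key := strictMonoFin_eq (lam.colLen (T i0).2)
    (fun r => M r (T i0).2) (fun r => M' r (T i0).2)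
    (fun a b hab hb => M.col_strict hab (YoungDiagram.mem_iff_lt_colLen.mpr hb))
    (fun a b hab hb => M'.col_strict hab (YoungDiagram.mem_iff_lt_colLen.mpr hb))
    him
  exact key (T i0).1 hr0

lemma col_perm_id {n : ℕ} {lam : YoungDiagram} {T : Fin n → ℕ × ℕ} {σ : Equiv.Perm (Fin n)}
    (hT : IsTabloid n lam T) (M : SemistandardYoungTableau lam) (hσ : σ ∈ colGroup n T)
    (h : Finsupp.mapDomain (⇑σ) (pexpF n (entryFun M) T) = pexpF n (entryFun M) T) :
    σ = 1 := by
  have hpt : ∀ i : Fin n, M (T (σ⁻¹ i)).1 (T (σ⁻¹ i)).2 = M (T i).1 (T i).2 := by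
    intro i
    have := congrFun (congrArg (fun (g : Fin n →₀ ℕ) => (g : Fin n → ℕ)) h) i
    rw [mapDomain_perm_apply, pexp_apply', pexp_apply'] at this
    exact this
  have hfix : ∀ i, σ⁻¹ i = i := by
    intro i
    have hc := colGroup_inv_apply hσ i
    have hrow : (T (σ⁻¹ i)).1 = (T i).1 := by
      by_contra hne
      have hm1 := hT.2 (σ⁻¹ i)
      have hm2 := hT.2 i
      rw [← Prod.mk.eta (p := T (σ⁻¹ i)), hc] at hm1
      rw [← Prod.mk.eta (p := T i)] at hm2
      have hpt' := hpt i
      rw [hc] at hpt'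
      rcases lt_or_gt_of_ne hne with hlt | hgt
      · have := M.col_strict hlt hm2
        rw [hpt'] at this
        exact lt_irrefl _ this
      · have := M.col_strict hgt hm1
        rw [hpt'] at this
        exact lt_irrefl _ this
    have : T (σ⁻¹ i) = T i := Prod.ext hrow hc
    exact hT.1 this
  have : σ⁻¹ = 1 := Equiv.ext fun i => hfix i
  rw [← inv_inv σ, this, inv_one]

lemma pexp_injective {n : ℕ} {lam : YoungDiagram} {T : Fin n → ℕ × ℕ}
    (hT : IsTabloid n lam T) (hcard : lam.card = n)
    (M M' : SemistandardYoungTableau lam)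
    (h : ∀ i : Fin n, M (T i).1 (T i).2 = M' (T i).1 (T i).2) : M = M' := by
  apply SemistandardYoungTableau.ext
  intro r c
  by_cases hm : (r, c) ∈ lam
  · obtain ⟨i, hi⟩ := T_surj hT hcard (r, c) hm
    have := h i
    rw [hi] at this
    exact this
  · rw [M.zeros hm, M'.zeros hm]

lemma stab_bridge (n : ℕ) (f : ℕ → ℕ → ℕ) (T : Fin n → ℕ × ℕ) :
    stabCardF n f T = ((rowGroup n T).filter fun τ : Equiv.Perm (Fin n) =>
      Finsupp.mapDomain (⇑τ) (pexpF n f T) = pexpF n f T).card := by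
  unfold stabCardF
  congr 1
  apply Finset.filter_congr
  intro τ _
  rw [pmon_eq, rename_monomial]
  constructor
  · intro h
    exact monomial_left_injective one_ne_zero h
  · intro h
    rw [h]

lemma stab_pos (n : ℕ) (f : ℕ → ℕ → ℕ) (T : Fin n → ℕ × ℕ) : 0 < stabCardF n f T := by
  rw [stab_bridge]
  refine Finset.card_pos.mpr ⟨1, Finset.mem_filter.mpr ⟨one_mem_rowGroup n T, ?_⟩⟩
  rw [Equiv.Perm.coe_one, Finsupp.mapDomain_id]

lemma coeff_FMTF (n : ℕ) (f : ℕ → ℕ → ℕ) (T : Fin n → ℕ × ℕ) (e : Fin n →₀ ℕ) :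
    coeff e (FMTF n f T) = (stabCardF n f T : ℚ)⁻¹ *
      ∑ σ ∈ colGroup n T, ∑ τ ∈ rowGroup n T, ((Equiv.Perm.sign σ : ℤ) : ℚ) *
        (if Finsupp.mapDomain (⇑σ) (Finsupp.mapDomain (⇑τ) (pexpF n f T)) = e then 1
          else 0) := by
  rw [FMTF, youngSym, symRT, antisym, coeff_smul, smul_eq_mul]
  congr 1
  rw [coeff_sum]
  refine Finset.sum_congr rfl fun σ _ => ?_
  rw [coeff_smul, map_sum, coeff_sum, smul_eq_mul, Finset.mul_sum]
  refine Finset.sum_congr rfl fun τ _ => ?_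
  rw [pmon_eq, rename_monomial, rename_monomial, coeff_monomial]

lemma coeff_self {n : ℕ} {lam : YoungDiagram} {T : Fin n → ℕ × ℕ}
    (hT : IsTabloid n lam T) (hcard : lam.card = n) (M : SemistandardYoungTableau lam) :
    coeff (pexpF n (entryFun M) T) (FMT n M T) = 1 := by
  rw [FMT, coeff_FMTF]
  have hterm : ∀ σ ∈ colGroup n T, ∀ τ ∈ rowGroup n T,
      ((Equiv.Perm.sign σ : ℤ) : ℚ) *
        (if Finsupp.mapDomain (⇑σ) (Finsupp.mapDomain (⇑τ) (pexpF n (entryFun M) T))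
            = pexpF n (entryFun M) T then 1 else 0)
      = if Finsupp.mapDomain (⇑τ) (pexpF n (entryFun M) T) = pexpF n (entryFun M) T ∧ σ = 1
          then 1 else 0 := by
    intro σ hσ τ hτ
    by_cases hC : Finsupp.mapDomain (⇑σ) (Finsupp.mapDomain (⇑τ) (pexpF n (entryFun M) T))
        = pexpF n (entryFun M) T
    · have htd : ∀ j, tdeg n T (Finsupp.mapDomain (⇑τ) (pexpF n (entryFun M) T)) j
          = tdeg n T (pexpF n (entryFun M) T) j := by
        intro j
        refine le_antisymm (tdeg_row_le' hT M hτ j) ?_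
        conv_lhs => rw [← hC]
        rw [tdeg_mapDomain_col hσ]
      have hstab := row_stab hT M hτ htd
      have hC2 := hC
      rw [hstab] at hC2
      have hσ1 : σ = 1 := col_perm_id hT M hσ hC2
      rw [if_pos hC, if_pos ⟨hstab, hσ1⟩, hσ1]
      simp
    · have hnot : ¬ (Finsupp.mapDomain (⇑τ) (pexpF n (entryFun M) T) = pexpF n (entryFun M) T
          ∧ σ = 1) := by
        rintro ⟨h1, rfl⟩
        apply hC
        rw [h1, Equiv.Perm.coe_one, Finsupp.mapDomain_id]
      rw [if_neg hC, if_neg hnot, mul_zero]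
  rw [Finset.sum_congr rfl fun σ hσ => Finset.sum_congr rfl fun τ hτ => hterm σ hσ τ hτ]
  rw [Finset.sum_comm]
  have hinner : ∀ τ ∈ rowGroup n T,
      (∑ σ ∈ colGroup n T,
        if Finsupp.mapDomain (⇑τ) (pexpF n (entryFun M) T) = pexpF n (entryFun M) T ∧ σ = 1
          then (1:ℚ) else 0)
      = if Finsupp.mapDomain (⇑τ) (pexpF n (entryFun M) T) = pexpF n (entryFun M) T
          then 1 else 0 := by
    intro τ _
    by_cases hP : Finsupp.mapDomain (⇑τ) (pexpF n (entryFun M) T) = pexpF n (entryFun M) T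
    · simp only [hP, true_and, if_true]
      rw [Finset.sum_ite_eq' (colGroup n T) 1 (fun _ => (1:ℚ)), if_pos (one_mem_colGroup n T)]
    · simp [hP]
  rw [Finset.sum_congr rfl hinner, Finset.sum_boole, ← stab_bridge]
  rw [inv_mul_cancel₀]
  exact Nat.cast_ne_zero.mpr (stab_pos n (entryFun M) T).ne'

lemma coeff_other {n : ℕ} {lam : YoungDiagram} {T : Fin n → ℕ × ℕ}
    (hT : IsTabloid n lam T) (hcard : lam.card = n)
    (M M' : SemistandardYoungTableau lam)
    (hne : coeff (pexpF n (entryFun M) T) (FMT n M' T) ≠ 0) :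
    (∀ j, tdeg n T (pexpF n (entryFun M) T) j ≤ tdeg n T (pexpF n (entryFun M') T) j)
    ∧ ((∀ j, tdeg n T (pexpF n (entryFun M) T) j = tdeg n T (pexpF n (entryFun M') T) j)
        → M = M') := by
  rw [FMT, coeff_FMTF] at hne
  have hsum : (∑ σ ∈ colGroup n T, ∑ τ ∈ rowGroup n T, ((Equiv.Perm.sign σ : ℤ) : ℚ) *
      (if Finsupp.mapDomain (⇑σ) (Finsupp.mapDomain (⇑τ) (pexpF n (entryFun M') T))
        = pexpF n (entryFun M) T then 1 else 0)) ≠ 0 := by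
    intro h0
    rw [h0, mul_zero] at hne
    exact hne rfl
  obtain ⟨σ, hσ, hs2⟩ := Finset.exists_ne_zero_of_sum_ne_zero hsum
  obtain ⟨τ, hτ, hs3⟩ := Finset.exists_ne_zero_of_sum_ne_zero hs2
  have hC : Finsupp.mapDomain (⇑σ) (Finsupp.mapDomain (⇑τ) (pexpF n (entryFun M') T))
      = pexpF n (entryFun M) T := by
    by_contra hcc
    rw [if_neg hcc, mul_zero] at hs3
    exact hs3 rfl
  have hkey : ∀ j, tdeg n T (pexpF n (entryFun M) T) j
      = tdeg n T (Finsupp.mapDomain (⇑τ) (pexpF n (entryFun M') T)) j := by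
    intro j
    conv_lhs => rw [← hC]
    rw [tdeg_mapDomain_col hσ]
  constructor
  · intro j
    rw [hkey j]
    exact tdeg_row_le' hT M' hτ j
  · intro hEq
    have htd : ∀ j, tdeg n T (Finsupp.mapDomain (⇑τ) (pexpF n (entryFun M') T)) j
        = tdeg n T (pexpF n (entryFun M') T) j := by
      intro j
      rw [← hkey j]
      exact hEq j
    have hstab := row_stab hT M' hτ htd
    rw [hstab] at hC
    exact pexp_injective hT hcard M M' (col_entry_eq hT hcard M M' hσ hC)

theorem stmt12 (n d : ℕ) (hn : 1 ≤ n) (lam : YoungDiagram) (hcard : lam.card = n)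
    (T : Fin n → ℕ × ℕ) (hT : IsTabloid n lam T) :
    LinearIndependent ℚ
      (fun M : {M : SemistandardYoungTableau lam // entrySum M = d} => FMT n M.1 T) := by
  rw [linearIndependent_iff']
  intro s g hsum i0 hi0
  by_contra hg0
  classical
  have hSfin : (↑(s.filter fun i => g i ≠ 0) : Set {M : SemistandardYoungTableau lam // entrySum M = d}).Finite := (s.filter _).finite_toSet
  have hSne : (↑(s.filter fun i => g i ≠ 0) : Set {M : SemistandardYoungTableau lam // entrySum M = d}).Nonempty :=
    ⟨i0, Finset.mem_coe.mpr (Finset.mem_filter.mpr ⟨hi0, hg0⟩)⟩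
  obtain ⟨Mm, hMm, hmax⟩ := Set.Finite.exists_maximalFor
    (fun Ms : {M : SemistandardYoungTableau lam // entrySum M = d} =>
      ((fun j => tdeg n T (pexpF n (entryFun Ms.1) T) j) : ℕ → ℕ))
    (↑(s.filter fun i => g i ≠ 0)) hSfin hSne
  have hMs : Mm ∈ s ∧ g Mm ≠ 0 := Finset.mem_filter.mp (Finset.mem_coe.mp hMm)
  have h0 : coeff (pexpF n (entryFun Mm.1) T) (∑ i ∈ s, g i • FMT n i.1 T) = 0 := by
    rw [hsum, coeff_zero]
  rw [coeff_sum] at h0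
  simp only [coeff_smul, smul_eq_mul] at h0
  have hred : ∀ i ∈ s, i ≠ Mm →
      g i * coeff (pexpF n (entryFun Mm.1) T) (FMT n i.1 T) = 0 := by
    intro i hi hine
    by_cases hgi : g i = 0
    · rw [hgi, zero_mul]
    by_cases hci : coeff (pexpF n (entryFun Mm.1) T) (FMT n i.1 T) = 0
    · rw [hci, mul_zero]
    exfalso
    obtain ⟨hle, heqc⟩ := coeff_other hT hcard Mm.1 i.1 hci
    have heq2 := le_antisymm (fun j => hle j) (hmax (Finset.mem_coe.mpr (Finset.mem_filter.mpr ⟨hi, hgi⟩))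
      (fun j => hle j))
    have hM : Mm.1 = i.1 := heqc fun j => congrFun heq2 j
    exact hine (Subtype.ext hM).symm
  rw [Finset.sum_eq_single_of_mem Mm hMs.1 hred, coeff_self hT hcard Mm.1, mul_one] at h0
  exact hMs.2 h0
end GHS
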